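/- arXiv:1711.05711 — 2 statements merged into one kernel-verified Lean document; each statement's English description precedes it below -/
import Mathlib

section
/- With notation as in the Pohozaev setting, let U = {u ∈ H¹(ℝ^N) : ∫|∇u|² dx = 1 and ∫G(u) dx > 0} and M = {u ∈ H¹(ℝ^N)\{0} : ∫|∇u|² = 2*∫G(u)}. Then the map m: U → M, m(u) = u(r(u)·) with r(u) = (2*∫G(u) dx)^{1/2}, is a bijection with inverse m^{-1}(u) = u(ψ(u)^{1/(N-2)} ·), where ψ(u) = ∫|∇u|² dx. -/
open MeasureTheory Filter Topology

noncomputable section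

/-- Membership in `H¹(ℝ^N)`, modelled by differentiable functions `u` with
`u ∈ L²` and `∇u ∈ L²`. -/
def MemH1 (N : ℕ) (u : EuclideanSpace ℝ (Fin N) → ℝ) : Prop :=
  Differentiable ℝ u ∧ MemLp u 2 volume ∧ MemLp (gradient u) 2 volume

/-- The set `U = {u ∈ H¹ : ∫|∇u|² = 1, ∫G(u) > 0}`. -/
def Uset (N : ℕ) (G : ℝ → ℝ) : Set (EuclideanSpace ℝ (Fin N) → ℝ) :=
  {u | MemH1 N u ∧ Integrable (fun x => G (u x)) volume ∧
    (∫ x, ‖gradient u x‖ ^ 2) = 1 ∧ 0 < ∫ x, G (u x)}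

/-- The Pohozaev manifold `M = {u ∈ H¹ \ {0} : ∫|∇u|² = 2* ∫G(u)}`. -/
def Mset (N : ℕ) (G : ℝ → ℝ) : Set (EuclideanSpace ℝ (Fin N) → ℝ) :=
  {u | MemH1 N u ∧ Integrable (fun x => G (u x)) volume ∧
    ¬ (u =ᵐ[volume] (fun _ => (0:ℝ))) ∧
    (∫ x, ‖gradient u x‖ ^ 2) = (2 * (N:ℝ)) / ((N:ℝ) - 2) * ∫ x, G (u x)}

/-- The map `m(u) = u(r(u)·)`, `r(u) = (2* ∫ G(u))^{1/2}`. -/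
def mMap (N : ℕ) (G : ℝ → ℝ) (u : EuclideanSpace ℝ (Fin N) → ℝ) :
    EuclideanSpace ℝ (Fin N) → ℝ :=
  fun x => u (Real.sqrt ((2 * (N:ℝ)) / ((N:ℝ) - 2) * ∫ z, G (u z)) • x)

/-- The map `m⁻¹(u) = u(ψ(u)^{1/(N-2)}·)`, `ψ(u) = ∫|∇u|²`. -/
def mInv (N : ℕ) (u : EuclideanSpace ℝ (Fin N) → ℝ) :
    EuclideanSpace ℝ (Fin N) → ℝ :=
  fun x => u (((∫ z, ‖gradient u z‖ ^ 2) ^ (1 / ((N:ℝ) - 2))) • x)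

/-! ### Auxiliary scaling lemmas -/

section Aux

variable {N : ℕ}

theorem PM.grad_comp_smul {u : EuclideanSpace ℝ (Fin N) → ℝ} (hu : Differentiable ℝ u) (c : ℝ) :
    gradient (fun x : EuclideanSpace ℝ (Fin N) => u (c • x))
      = fun x => c • gradient u (c • x) := by
  apply gradient_eq
  intro x
  rw [hasGradientAt_iff_hasFDerivAt]
  have h1 : HasFDerivAt u (InnerProductSpace.toDual ℝ _ (gradient u (c • x))) (c • x) :=
    (hu (c • x)).hasGradientAt
  have h2 : HasFDerivAt (fun y : EuclideanSpace ℝ (Fin N) => c • y)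
      (c • ContinuousLinearMap.id ℝ (EuclideanSpace ℝ (Fin N))) x :=
    (c • ContinuousLinearMap.id ℝ (EuclideanSpace ℝ (Fin N))).hasFDerivAt
  have := h1.comp x h2
  refine this.congr_fderiv ?_
  ext y
  simp [real_inner_smul_left, real_inner_smul_right]

theorem PM.int_comp_smul (f : EuclideanSpace ℝ (Fin N) → ℝ) {c : ℝ} (hc : 0 < c) :
    ∫ x : EuclideanSpace ℝ (Fin N), f (c • x) = (c ^ N)⁻¹ * ∫ x, f x := by
  rw [MeasureTheory.Measure.integral_comp_smul volume f c]
  rw [finrank_euclideanSpace_fin, abs_of_nonneg (by positivity), smul_eq_mul]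

theorem PM.memLp_comp_smul {F : Type*} [NormedAddCommGroup F]
    {f : EuclideanSpace ℝ (Fin N) → F}
    {p : ENNReal} (hf : MemLp f p volume) {c : ℝ} (hc : c ≠ 0) :
    MemLp (fun x : EuclideanSpace ℝ (Fin N) => f (c • x)) p volume := by
  have hmap : Measure.map (c • ·) (volume : Measure (EuclideanSpace ℝ (Fin N))) =
      ENNReal.ofReal |(c ^ Module.finrank ℝ (EuclideanSpace ℝ (Fin N)))⁻¹| • volume :=
    Measure.map_addHaar_smul volume hc
  have hmeas : AEMeasurable (fun x : EuclideanSpace ℝ (Fin N) => c • x) volume :=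
    (measurable_const_smul c).aemeasurable
  have h1 : MemLp f p (Measure.map (c • ·) (volume : Measure (EuclideanSpace ℝ (Fin N)))) := by
    rw [hmap]
    exact hf.smul_measure ENNReal.ofReal_ne_top
  exact (memLp_map_measure_iff h1.1 hmeas).mp h1

theorem PM.grad_sq_int_comp_smul {u : EuclideanSpace ℝ (Fin N) → ℝ}
    (hu : Differentiable ℝ u) {c : ℝ} (hc : 0 < c) :
    ∫ x : EuclideanSpace ℝ (Fin N), ‖gradient (fun y => u (c • y)) x‖ ^ 2
      = c ^ 2 * (c ^ N)⁻¹ * ∫ x, ‖gradient u x‖ ^ 2 := by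
  rw [PM.grad_comp_smul hu c]
  have : ∀ x : EuclideanSpace ℝ (Fin N),
      ‖c • gradient u (c • x)‖ ^ 2 = c ^ 2 * ‖gradient u (c • x)‖ ^ 2 := by
    intro x
    rw [norm_smul]
    simp [mul_pow, Real.norm_eq_abs, sq_abs]
  simp_rw [this]
  rw [integral_const_mul]
  rw [PM.int_comp_smul (fun y => ‖gradient u y‖ ^ 2) hc]
  ring

theorem PM.memH1_comp_smul {u : EuclideanSpace ℝ (Fin N) → ℝ}
    (hu : Differentiable ℝ u) (h2 : MemLp u 2 volume) (h3 : MemLp (gradient u) 2 volume)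
    {c : ℝ} (hc : c ≠ 0) :
    MemH1 N (fun x : EuclideanSpace ℝ (Fin N) => u (c • x)) := by
  refine ⟨hu.comp (differentiable_id.const_smul c), PM.memLp_comp_smul h2 hc, ?_⟩
  rw [PM.grad_comp_smul hu c]
  exact PM.memLp_comp_smul (h3.const_smul c) hc

end Aux

/-! ### Maximal / constancy lemmas : an `H¹` function with a.e. vanishing gradient vanishes -/

section Const

variable {n : ℕ}

theorem PM.det_zero_lemma (i : Fin (n+1)) :
    (((ContinuousLinearMap.id ℝ (EuclideanSpace ℝ (Fin (n+1)))) +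
      (((0 : EuclideanSpace ℝ (Fin (n+1)) →L[ℝ] ℝ) - EuclideanSpace.proj i).smulRight
        (EuclideanSpace.single i (1:ℝ)))) : EuclideanSpace ℝ (Fin (n+1)) →L[ℝ] _).det = 0 := by
  set L := ((ContinuousLinearMap.id ℝ (EuclideanSpace ℝ (Fin (n+1)))) +
      (((0 : EuclideanSpace ℝ (Fin (n+1)) →L[ℝ] ℝ) - EuclideanSpace.proj i).smulRight
        (EuclideanSpace.single i (1:ℝ)))) with hL
  by_contra hdet
  have hinj : Function.Injective L := (LinearMap.equivOfDetNeZero _ hdet).injective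
  have h0 : L (EuclideanSpace.single i (1:ℝ)) = 0 := by
    simp [hL, ContinuousLinearMap.smulRight_apply, PiLp.proj_apply, EuclideanSpace.single_apply]
  have := hinj (h0.trans (map_zero L).symm)
  have : ‖EuclideanSpace.single i (1:ℝ)‖ = 1 := by simp [EuclideanSpace.norm_single]
  simp_all

theorem PM.image_null {u : EuclideanSpace ℝ (Fin (n+1)) → ℝ} (hu : Differentiable ℝ u)
    (hg : fderiv ℝ u =ᵐ[volume] 0) (i : Fin (n+1)) :
    volume ((fun x : EuclideanSpace ℝ (Fin (n+1)) =>
      x + (u x - x i) • EuclideanSpace.single i (1:ℝ)) '' Set.univ) = 0 := by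
  set v : EuclideanSpace ℝ (Fin (n+1)) := EuclideanSpace.single i (1:ℝ) with hv
  set F : EuclideanSpace ℝ (Fin (n+1)) → EuclideanSpace ℝ (Fin (n+1)) :=
    fun x => x + (u x - x i) • v with hF
  set F' : EuclideanSpace ℝ (Fin (n+1)) →
      (EuclideanSpace ℝ (Fin (n+1)) →L[ℝ] EuclideanSpace ℝ (Fin (n+1))) := fun x =>
    (ContinuousLinearMap.id ℝ (EuclideanSpace ℝ (Fin (n+1)))) +
      ((fderiv ℝ u x - EuclideanSpace.proj i).smulRight v) with hF'
  have hder : ∀ x, HasFDerivAt F (F' x) x := by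
    intro x
    have h1 : HasFDerivAt (fun y : EuclideanSpace ℝ (Fin (n+1)) => u y - y i)
        (fderiv ℝ u x - EuclideanSpace.proj i) x :=
      ((hu x).hasFDerivAt).sub
        ((EuclideanSpace.proj i : EuclideanSpace ℝ (Fin (n+1)) →L[ℝ] ℝ).hasFDerivAt)
    exact (hasFDerivAt_id x).add (h1.smul_const v)
  set s : Set (EuclideanSpace ℝ (Fin (n+1))) := {x | fderiv ℝ u x = 0} with hs
  have hsm : MeasurableSet s := measurable_fderiv ℝ u (measurableSet_singleton 0)
  have hscompl : volume sᶜ = 0 := by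
    have h := ae_iff.mp hg
    simpa [hs, Set.compl_setOf] using h
  have h1 : volume (F '' s) = 0 := by
    refine le_antisymm ?_ zero_le
    calc volume (F '' s) ≤ ∫⁻ x in s, ENNReal.ofReal |(F' x).det| :=
          addHaar_image_le_lintegral_abs_det_fderiv volume hsm
            (fun x _ => (hder x).hasFDerivWithinAt)
      _ = ∫⁻ _ in s, (0:ENNReal) := by
          apply setLIntegral_congr_fun hsm
          intro x hx
          have hx0 : fderiv ℝ u x = 0 := hx
          have hFx : F' x = (ContinuousLinearMap.id ℝ (EuclideanSpace ℝ (Fin (n+1)))) +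
              (((0 : EuclideanSpace ℝ (Fin (n+1)) →L[ℝ] ℝ) -
                EuclideanSpace.proj i).smulRight v) := by
            simp only [hF', hx0]
          show ENNReal.ofReal |(F' x).det| = 0
          rw [hFx, hv, PM.det_zero_lemma i]
          simp
      _ = 0 := by simp
  have h2 : volume (F '' sᶜ) = 0 := by
    refine le_antisymm ?_ zero_le
    calc volume (F '' sᶜ) ≤ ∫⁻ x in sᶜ, ENNReal.ofReal |(F' x).det| :=
          addHaar_image_le_lintegral_abs_det_fderiv volume hsm.compl
            (fun x _ => (hder x).hasFDerivWithinAt)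
      _ = 0 := by rw [setLIntegral_measure_zero _ _ hscompl]
  refine le_antisymm ?_ zero_le
  calc volume (F '' Set.univ) ≤ volume (F '' s ∪ F '' sᶜ) := by
        rw [← Set.image_union, Set.union_compl_self]
      _ ≤ volume (F '' s) + volume (F '' sᶜ) := measure_union_le _ _
      _ = 0 := by rw [h1, h2, add_zero]

def PM.psiEq (i : Fin (n+1)) : EuclideanSpace ℝ (Fin (n+1)) ≃ᵐ ((Fin n → ℝ) × ℝ) :=
  ((MeasurableEquiv.toLp 2 (Fin (n+1) → ℝ)).symm.trans
    (MeasurableEquiv.piFinSuccAbove (fun _ => ℝ) i)).trans (MeasurableEquiv.prodComm)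

theorem PM.psiEq_mp (i : Fin (n+1)) :
    MeasurePreserving (PM.psiEq i) volume
      ((volume : Measure (Fin n → ℝ)).prod (volume : Measure ℝ)) := by
  have h1 := EuclideanSpace.volume_preserving_symm_measurableEquiv_toLp (Fin (n+1))
  have h2 := volume_preserving_piFinSuccAbove (fun _ : Fin (n+1) => ℝ) i
  have h3 : MeasurePreserving (Prod.swap : ℝ × (Fin n → ℝ) → (Fin n → ℝ) × ℝ)
      ((volume : Measure ℝ).prod (volume : Measure (Fin n → ℝ)))
      ((volume : Measure (Fin n → ℝ)).prod (volume : Measure ℝ)) :=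
    Measure.measurePreserving_swap
  exact h3.comp (h2.comp h1)

theorem PM.psi_symm_add (i : Fin (n+1)) (x' : Fin n → ℝ) (s t : ℝ) :
    (PM.psiEq i).symm (x', s) + t • EuclideanSpace.single i (1:ℝ)
      = (PM.psiEq i).symm (x', s + t) := by
  apply PiLp.ext
  intro j
  have hL : ∀ c : ℝ, ((PM.psiEq i).symm (x', c)) j
      = (i.insertNth (α := fun _ => ℝ) c x') j := fun _ => rfl
  show ((PM.psiEq i).symm (x', s)) j + t * (EuclideanSpace.single i (1:ℝ)) j = _
  rw [hL, hL, EuclideanSpace.single_apply]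
  refine Fin.succAboveCases i ?_ (fun k => ?_) j
  · simp [Fin.insertNth_apply_same]
  · simp [Fin.insertNth_apply_succAbove, Fin.succAbove_ne i k]

theorem PM.psi_F_eq (i : Fin (n+1)) (u : EuclideanSpace ℝ (Fin (n+1)) → ℝ)
    (y : EuclideanSpace ℝ (Fin (n+1))) :
    y + (u y - y i) • EuclideanSpace.single i (1:ℝ)
      = (PM.psiEq i).symm ((fun k => y (i.succAbove k)), u y) := by
  apply PiLp.ext
  intro j
  have hL : ((PM.psiEq i).symm ((fun k => y (i.succAbove k)), u y)) j
      = (i.insertNth (α := fun _ => ℝ) (u y) (fun k => y (i.succAbove k))) j := rfl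
  show y j + (u y - y i) * (EuclideanSpace.single i (1:ℝ)) j = _
  rw [hL, EuclideanSpace.single_apply]
  refine Fin.succAboveCases i ?_ (fun k => ?_) j
  · simp [Fin.insertNth_apply_same]
  · simp [Fin.insertNth_apply_succAbove, Fin.succAbove_ne i k]

theorem PM.translation_inv (i : Fin (n+1)) {u : EuclideanSpace ℝ (Fin (n+1)) → ℝ}
    (hu : Differentiable ℝ u)
    (hg : fderiv ℝ u =ᵐ[volume] 0) (t : ℝ) (y : EuclideanSpace ℝ (Fin (n+1))) :
    u (y + t • EuclideanSpace.single i (1:ℝ)) = u y := by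
  set e : EuclideanSpace ℝ (Fin (n+1)) := EuclideanSpace.single i (1:ℝ) with he
  set F : EuclideanSpace ℝ (Fin (n+1)) → EuclideanSpace ℝ (Fin (n+1)) :=
    fun x => x + (u x - x i) • e with hF
  have hA : volume (F '' Set.univ) = 0 := PM.image_null hu hg i
  obtain ⟨B, hAB, hBm, hB0⟩ := exists_measurable_superset_of_null hA
  set ψ := PM.psiEq i with hψ
  have hmp : MeasurePreserving ψ.symm
      ((volume : Measure (Fin n → ℝ)).prod (volume : Measure ℝ)) volume :=
    (PM.psiEq_mp i).symm ψ
  have hB' : ((volume : Measure (Fin n → ℝ)).prod (volume : Measure ℝ)) (ψ.symm ⁻¹' B) = 0 := by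
    rw [hmp.measure_preimage hBm.nullMeasurableSet]; exact hB0
  have hslice : ∀ᵐ x' ∂(volume : Measure (Fin n → ℝ)),
      volume (Prod.mk x' ⁻¹' (ψ.symm ⁻¹' B)) = 0 :=
    (Measure.measure_prod_null (ψ.symm.measurable hBm)).mp hB'
  have claim1 : ∀ x' : Fin n → ℝ, volume (Prod.mk x' ⁻¹' (ψ.symm ⁻¹' B)) = 0 →
      ∀ s₁ s₂ : ℝ, u (ψ.symm (x', s₁)) = u (ψ.symm (x', s₂)) := by
    intro x' hx' s₁ s₂
    set g : ℝ → ℝ := fun s => u (ψ.symm (x', s)) with hgdef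
    have hgy : ∀ s : ℝ, ψ.symm (x', s) = ψ.symm (x', (0:ℝ)) + s • e := by
      intro s
      rw [PM.psi_symm_add i x' 0 s, zero_add]
    have gcont : Continuous g := by
      have h0 : g = fun s => u (ψ.symm (x', (0:ℝ)) + s • e) := by
        funext s
        rw [hgdef]
        simp only [hgy s]
      rw [h0]
      exact hu.continuous.comp (continuous_const.add (continuous_id.smul continuous_const))
    have hrange : Set.range g ⊆ Prod.mk x' ⁻¹' (ψ.symm ⁻¹' B) := by
      rintro - ⟨s, rfl⟩
      have hy : ψ (ψ.symm (x', s)) = (x', s) := ψ.apply_symm_apply _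
      have hfst : (fun k => (ψ.symm (x', s)) (i.succAbove k)) = x' :=
        congrArg Prod.fst hy
      have hmem : F (ψ.symm (x', s)) ∈ B := hAB (Set.mem_image_of_mem _ (Set.mem_univ _))
      have heq := PM.psi_F_eq i u (ψ.symm (x', s))
      rw [hfst] at heq
      have h2 : F (ψ.symm (x', s)) = ψ.symm (x', g s) := heq
      rw [h2] at hmem
      exact hmem
    by_contra hne
    rcases lt_or_gt_of_ne hne with h | h
    · have hIcc : Set.Icc (g s₁) (g s₂) ⊆ Set.range g :=
        ((isPreconnected_range gcont).ordConnected).out ⟨s₁, rfl⟩ ⟨s₂, rfl⟩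
      have := measure_mono (μ := (volume : Measure ℝ)) (hIcc.trans hrange)
      rw [hx', Real.volume_Icc] at this
      simp only [nonpos_iff_eq_zero, ENNReal.ofReal_eq_zero] at this
      linarith
    · have hIcc : Set.Icc (g s₂) (g s₁) ⊆ Set.range g :=
        ((isPreconnected_range gcont).ordConnected).out ⟨s₂, rfl⟩ ⟨s₁, rfl⟩
      have := measure_mono (μ := (volume : Measure ℝ)) (hIcc.trans hrange)
      rw [hx', Real.volume_Icc] at this
      simp only [nonpos_iff_eq_zero, ENNReal.ofReal_eq_zero] at this
      linarith
  set T : Set (EuclideanSpace ℝ (Fin (n+1))) := {y | u (y + t • e) ≠ u y} with hT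
  have hTopen : IsOpen T := by
    have hc : Continuous fun y : EuclideanSpace ℝ (Fin (n+1)) => u (y + t • e) :=
      hu.continuous.comp (continuous_id.add continuous_const)
    exact isOpen_ne_fun hc hu.continuous
  have hT0 : volume T = 0 := by
    have hTm : MeasurableSet T := hTopen.measurableSet
    rw [← hmp.measure_preimage hTm.nullMeasurableSet]
    rw [Measure.measure_prod_null (ψ.symm.measurable hTm)]
    filter_upwards [hslice] with x' hx'
    have : Prod.mk x' ⁻¹' (ψ.symm ⁻¹' T) = ∅ := by
      ext s
      simp only [Set.mem_preimage, Set.mem_empty_iff_false, iff_false, hT, Set.mem_setOf_eq]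
      rw [PM.psi_symm_add i x' s t]
      intro hcon
      exact hcon (claim1 x' hx' (s + t) s)
    rw [this]
    simp
  by_contra hcon
  have hymem : y ∈ T := hcon
  have := hTopen.measure_pos volume ⟨y, hymem⟩
  rw [hT0] at this
  exact lt_irrefl 0 this

theorem PM.u_const {u : EuclideanSpace ℝ (Fin (n+1)) → ℝ} (hu : Differentiable ℝ u)
    (hg : fderiv ℝ u =ᵐ[volume] 0) (x y : EuclideanSpace ℝ (Fin (n+1))) : u x = u y := by
  have key : ∀ (s : Finset (Fin (n+1))) (z : EuclideanSpace ℝ (Fin (n+1)))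
      (v : EuclideanSpace ℝ (Fin (n+1))),
      u (z + ∑ j ∈ s, v j • EuclideanSpace.single j (1:ℝ)) = u z := by
    intro s
    induction s using Finset.induction_on with
    | empty => intro z v; simp
    | insert _ _ hnotmem =>
      rename_i j s' ih
      intro z v
      rw [Finset.sum_insert hnotmem, add_comm (v j • _), ← add_assoc,
        PM.translation_inv j hu hg (v j) _]
      exact ih z v
  have hdecomp : x = y + ∑ j, (x - y) j • EuclideanSpace.single j (1:ℝ) := by
    have hb := (EuclideanSpace.basisFun (Fin (n+1)) ℝ).sum_repr (x - y)
    simp only [EuclideanSpace.basisFun_repr, EuclideanSpace.basisFun_apply] at hb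
    rw [hb]
    abel
  calc u x = u (y + ∑ j, (x - y) j • EuclideanSpace.single j (1:ℝ)) := by rw [← hdecomp]
    _ = u y := key _ y _

theorem PM.zero_of_grad {N : ℕ} (hN : 0 < N) {u : EuclideanSpace ℝ (Fin N) → ℝ}
    (hu : Differentiable ℝ u) (h2 : MemLp u 2 volume)
    (hgrad : gradient u =ᵐ[volume] (fun _ => (0 : EuclideanSpace ℝ (Fin N)))) :
    u =ᵐ[volume] (fun _ => (0:ℝ)) := by
  obtain ⟨n, rfl⟩ : ∃ n, N = n + 1 := ⟨N - 1, (Nat.succ_pred_eq_of_pos hN).symm⟩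
  have hfd : fderiv ℝ u =ᵐ[volume] 0 := by
    filter_upwards [hgrad] with x hx
    have hx0 : gradient u x = 0 := hx
    rw [gradient] at hx0
    exact (InnerProductSpace.toDual ℝ
      (EuclideanSpace ℝ (Fin (n+1)))).symm.map_eq_zero_iff.mp hx0
  have hconst : ∀ x, u x = u 0 := fun x => PM.u_const hu hfd x 0
  have hueq : u = fun _ => u 0 := funext hconst
  have hvol : (volume : Measure (EuclideanSpace ℝ (Fin (n+1)))) Set.univ = (⊤ : ENNReal) :=
    MeasureTheory.measure_univ_of_isAddLeftInvariant volume
  have hc0 : u 0 = 0 := by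
    rw [hueq] at h2
    rcases (memLp_const_iff (by norm_num) (by norm_num)).mp h2 with h | h
    · exact h
    · rw [hvol] at h; exact absurd h (lt_irrefl _)
  rw [hueq, hc0]

theorem PM.psi_pos {N : ℕ} (hN : 0 < N) {u : EuclideanSpace ℝ (Fin N) → ℝ}
    (h1 : Differentiable ℝ u) (h2 : MemLp u 2 volume) (h3 : MemLp (gradient u) 2 volume)
    (hnz : ¬ (u =ᵐ[volume] (fun _ => (0:ℝ)))) :
    0 < ∫ x, ‖gradient u x‖ ^ 2 := by
  have hnn : 0 ≤ ∫ x, ‖gradient u x‖ ^ 2 :=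
    integral_nonneg (fun x => by positivity)
  rcases hnn.lt_or_eq with h | h
  · exact h
  · exfalso
    have hint : Integrable (fun x => ‖gradient u x‖ ^ 2) volume := by
      have h4 := h3.integrable_norm_rpow (by norm_num) (by norm_num)
      have ht2 : ((2:ENNReal)).toReal = (2:ℝ) := by norm_num
      rw [ht2] at h4
      refine h4.congr (Filter.Eventually.of_forall (fun x => ?_))
      show ‖gradient u x‖ ^ (2:ℝ) = ‖gradient u x‖ ^ (2:ℕ)
      rw [show ((2:ℝ)) = ((2:ℕ):ℝ) by norm_num, Real.rpow_natCast]
    have h0 : (fun x => ‖gradient u x‖ ^ 2) =ᵐ[volume] 0 :=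
      (integral_eq_zero_iff_of_nonneg (fun x => by positivity) hint).mp h.symm
    have hg0 : gradient u =ᵐ[volume] (fun _ => (0 : EuclideanSpace ℝ (Fin N))) := by
      filter_upwards [h0] with x hx
      have hx2 : ‖gradient u x‖ ^ 2 = 0 := hx
      have := pow_eq_zero_iff (two_ne_zero) |>.mp hx2
      simpa using this
    exact hnz (PM.zero_of_grad hN h1 h2 hg0)

end Const

/-! ### rpow arithmetic -/

lemma PM.cast_ne2 {N : ℕ} (hN : 3 ≤ N) : (N:ℝ) - 2 ≠ 0 := by
  have : (3:ℝ) ≤ (N:ℝ) := by exact_mod_cast hN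
  linarith

lemma PM.rpow_helper1 {N : ℕ} (hN : 3 ≤ N) {r : ℝ} (hr : 0 < r) :
    (r^2 * ((r:ℝ)^N)⁻¹) ^ (1/((N:ℝ)-2)) = r⁻¹ := by
  have h2N := PM.cast_ne2 hN
  have e1 : r^2 * ((r:ℝ)^N)⁻¹ = r ^ ((2:ℝ) - N) := by
    rw [← Real.rpow_natCast r 2, ← Real.rpow_natCast r N, ← Real.rpow_neg hr.le,
      ← Real.rpow_add hr]
    norm_num [sub_eq_add_neg]
  rw [e1, ← Real.rpow_mul hr.le]
  have : ((2:ℝ) - N) * (1/((N:ℝ)-2)) = -1 := by field_simp; ring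
  rw [this, Real.rpow_neg_one]

lemma PM.lam_pow_sub {N : ℕ} (hN : 3 ≤ N) {ψ : ℝ} (hψ : 0 < ψ) :
    (ψ ^ (1/((N:ℝ)-2))) ^ ((N:ℝ) - 2) = ψ := by
  rw [← Real.rpow_mul hψ.le]
  rw [one_div_mul_cancel (PM.cast_ne2 hN), Real.rpow_one]

lemma PM.rpow_helper2 {N : ℕ} (hN : 3 ≤ N) {ψ : ℝ} (hψ : 0 < ψ) :
    (ψ ^ (1/((N:ℝ)-2)))^2 * ((ψ ^ (1/((N:ℝ)-2)))^N)⁻¹ = ψ⁻¹ := by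
  have h2N := PM.cast_ne2 hN
  set l : ℝ := ψ ^ (1/((N:ℝ)-2)) with hl
  have hlpos : 0 < l := Real.rpow_pos_of_pos hψ _
  have e1 : l^2 * ((l:ℝ)^N)⁻¹ = l ^ ((2:ℝ) - N) := by
    rw [← Real.rpow_natCast l 2, ← Real.rpow_natCast l N, ← Real.rpow_neg hlpos.le,
      ← Real.rpow_add hlpos]
    norm_num [sub_eq_add_neg]
  rw [e1]
  have e2 : l ^ ((2:ℝ) - N) = (l ^ ((N:ℝ) - 2))⁻¹ := by
    rw [← Real.rpow_neg hlpos.le]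
    norm_num
  rw [e2, hl, PM.lam_pow_sub hN hψ]

lemma PM.rpow_helper3 {N : ℕ} (hN : 3 ≤ N) {ψ p : ℝ} (hψ : 0 < ψ) (hp : 0 < p) :
    p * (((ψ ^ (1/((N:ℝ)-2)))^N)⁻¹ * (ψ/p)) = ((ψ ^ (1/((N:ℝ)-2)))⁻¹)^2 := by
  have h2N := PM.cast_ne2 hN
  set l : ℝ := ψ ^ (1/((N:ℝ)-2)) with hl
  have hlpos : 0 < l := Real.rpow_pos_of_pos hψ _
  have e0 : p * (((l:ℝ)^N)⁻¹ * (ψ/p)) = ψ * ((l:ℝ)^N)⁻¹ := by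
    field_simp
  rw [e0]
  have e1 : ψ = l ^ ((N:ℝ) - 2) := (PM.lam_pow_sub hN hψ).symm
  rw [e1, ← Real.rpow_natCast l N, ← Real.rpow_neg hlpos.le, ← Real.rpow_add hlpos]
  rw [inv_pow, ← Real.rpow_natCast l 2, ← Real.rpow_neg hlpos.le]
  norm_num [sub_eq_add_neg]

/-- Proposition 4.1 (ii): `m : U → M`, `m(u) = u(r(u)·)` with
`r(u) = (2* ∫G(u))^{1/2}`, is a bijection from `U` onto the Pohozaev manifold `M`,
with inverse `m⁻¹(u) = u(ψ(u)^{1/(N-2)}·)` where `ψ(u) = ∫|∇u|²`. -/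
theorem mMap_bijective (N : ℕ) (hN : 3 ≤ N)
    (G : ℝ → ℝ) (hGcont : Continuous G) (hG0 : G 0 = 0)
    (hGgrowth : ∃ C > (0:ℝ), ∀ s : ℝ,
      |G s| ≤ C * (s ^ 2 + |s| ^ ((2 * (N:ℝ)) / ((N:ℝ) - 2)))) :
    Set.BijOn (mMap N G) (Uset N G) (Mset N G) ∧
    (∀ u ∈ Uset N G, mInv N (mMap N G u) = u) ∧
    (∀ u ∈ Mset N G, mMap N G (mInv N u) = u) := by
  have hNpos : 0 < N := by omega
  have hNR : (3:ℝ) ≤ (N:ℝ) := by exact_mod_cast hN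
  have hp : 0 < (2 * (N:ℝ)) / ((N:ℝ) - 2) := by
    apply div_pos <;> linarith
  -- key forward direction
  have key1 : ∀ u ∈ Uset N G, (mMap N G u ∈ Mset N G) ∧ mInv N (mMap N G u) = u := by
    intro u hu
    obtain ⟨⟨hdiff, hL2, hgL2⟩, hGint, hgrad1, hGpos⟩ := hu
    set p : ℝ := (2 * (N:ℝ)) / ((N:ℝ) - 2) with hpdef
    set A : ℝ := ∫ z, G (u z) with hA
    set r : ℝ := Real.sqrt (p * A) with hrdef
    have hr : 0 < r := Real.sqrt_pos.mpr (mul_pos hp hGpos)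
    have hr2 : r ^ 2 = p * A := Real.sq_sqrt (mul_pos hp hGpos).le
    have hmeq : mMap N G u = fun x => u (r • x) := rfl
    have hmemH1 : MemH1 N (mMap N G u) := by
      rw [hmeq]; exact PM.memH1_comp_smul hdiff hL2 hgL2 hr.ne'
    have hGint' : Integrable (fun x => G (mMap N G u x)) volume := by
      rw [hmeq]
      exact (hGint.comp_smul hr.ne' : _)
    have hGval : (∫ x, G (mMap N G u x)) = (r^N)⁻¹ * A := by
      rw [hmeq]
      exact PM.int_comp_smul (fun z => G (u z)) hr
    have hgradval : (∫ x, ‖gradient (mMap N G u) x‖ ^ 2) = r^2 * (r^N)⁻¹ := by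
      rw [hmeq, PM.grad_sq_int_comp_smul hdiff hr, hgrad1, mul_one]
    have hGposm : 0 < ∫ x, G (mMap N G u x) := by
      rw [hGval]
      positivity
    have hmem : mMap N G u ∈ Mset N G := by
      refine ⟨hmemH1, hGint', ?_, ?_⟩
      · intro hae
        have : (fun x => G (mMap N G u x)) =ᵐ[volume] (fun _ => (0:ℝ)) := by
          filter_upwards [hae] with x hx
          simp only [hx, hG0]
        rw [integral_congr_ae this, integral_zero] at hGposm
        exact lt_irrefl 0 hGposm
      · rw [hgradval, hGval, hr2, ← hpdef]
        ring
    refine ⟨hmem, ?_⟩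
    funext x
    show (mMap N G u) (((∫ z, ‖gradient (mMap N G u) z‖ ^ 2) ^ (1 / ((N:ℝ) - 2))) • x) = u x
    rw [hgradval, PM.rpow_helper1 hN hr]
    show u (r • (r⁻¹ • x)) = u x
    rw [smul_smul, mul_inv_cancel₀ hr.ne', one_smul]
  -- key backward direction
  have key2 : ∀ u ∈ Mset N G, (mInv N u ∈ Uset N G) ∧ mMap N G (mInv N u) = u := by
    intro u hu
    obtain ⟨⟨hdiff, hL2, hgL2⟩, hGint, hnz, heq⟩ := hu
    set p : ℝ := (2 * (N:ℝ)) / ((N:ℝ) - 2) with hpdef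
    set ψ : ℝ := ∫ z, ‖gradient u z‖ ^ 2 with hψdef
    have hψpos : 0 < ψ := PM.psi_pos hNpos hdiff hL2 hgL2 hnz
    set l : ℝ := ψ ^ (1 / ((N:ℝ) - 2)) with hldef
    have hl : 0 < l := Real.rpow_pos_of_pos hψpos _
    have hBval : (∫ z, G (u z)) = ψ / p := by
      rw [eq_div_iff hp.ne']
      rw [heq]
      ring
    have hmeq : mInv N u = fun x => u (l • x) := rfl
    have hmemH1 : MemH1 N (mInv N u) := by
      rw [hmeq]; exact PM.memH1_comp_smul hdiff hL2 hgL2 hl.ne'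
    have hGint' : Integrable (fun x => G (mInv N u x)) volume := by
      rw [hmeq]
      exact (hGint.comp_smul hl.ne' : _)
    have hGval : (∫ x, G (mInv N u x)) = (l^N)⁻¹ * (ψ / p) := by
      rw [hmeq, PM.int_comp_smul (fun z => G (u z)) hl, hBval]
    have hgradval : (∫ x, ‖gradient (mInv N u) x‖ ^ 2) = 1 := by
      rw [hmeq, PM.grad_sq_int_comp_smul hdiff hl, ← hψdef, hldef,
        PM.rpow_helper2 hN hψpos]
      exact inv_mul_cancel₀ hψpos.ne'
    have hGpos' : 0 < ∫ x, G (mInv N u x) := by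
      rw [hGval]
      positivity
    refine ⟨⟨hmemH1, hGint', hgradval, hGpos'⟩, ?_⟩
    funext x
    show (mInv N u) (Real.sqrt (p * ∫ z, G (mInv N u z)) • x) = u x
    rw [hGval, PM.rpow_helper3 hN hψpos hp, Real.sqrt_sq (by positivity)]
    show u (l • ((ψ ^ (1 / ((N:ℝ) - 2)))⁻¹ • x)) = u x
    rw [← hldef, smul_smul, mul_inv_cancel₀ hl.ne', one_smul]
  refine ⟨⟨fun u hu => (key1 u hu).1, ?_, ?_⟩, fun u hu => (key1 u hu).2,
    fun u hu => (key2 u hu).2⟩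
  · intro u1 h1 u2 h2 heq
    rw [← (key1 u1 h1).2, ← (key1 u2 h2).2, heq]
  · intro v hv
    exact ⟨mInv N v, (key2 v hv).1, (key2 v hv).2⟩
end
end

section
/- Let g = g₁ − g₂ be as in the Pohozaev setting with g₂(s) = ms + g₃(s), where g₃(s)s ≥ 0 for all s ∈ ℝ and m > 0. Suppose (w_n) ⊂ H¹(ℝ^N) with w_n ⇀ ũ weakly in H¹, ∫g₃(w_n)w_n dx and m∫|w_n|² dx are each bounded, ∫g₂(w_n)w_n dx → ∫g₂(ũ)ũ dx, and liminf ∫g₃(w_n)w_n dx ≥ ∫g₃(ũ)ũ dx (by Fatou). Then ∫|w_n|² dx → ∫|ũ|² dx, and hence w_n → ũ strongly in L²(ℝ^N). -/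
open MeasureTheory Filter Topology

noncomputable section

private lemma l2_mul_integrable {α : Type*} [MeasurableSpace α] {μ : Measure α}
    {f g : α → ℝ} (hf : MemLp f 2 μ) (hg : MemLp g 2 μ) :
    Integrable (fun x => f x * g x) μ := by
  apply Integrable.mono' ((hf.integrable_sq.add hg.integrable_sq).const_mul (1/2))
    (hf.aestronglyMeasurable.mul hg.aestronglyMeasurable)
  filter_upwards with x
  simp only [Pi.mul_apply, Pi.add_apply]
  rw [Real.norm_eq_abs, abs_mul]
  nlinarith [sq_nonneg (|f x| - |g x|), sq_abs (f x), sq_abs (g x), abs_nonneg (f x),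
    abs_nonneg (g x)]

/-- final compactness step in Lemma 4.7: with `g₂(s) = ms + g₃(s)`,
`g₃(s)s ≥ 0`, `m > 0`, if `w_n ⇀ ũ` weakly in `L²(ℝ^N)`, the quantities
`∫ g₃(w_n)w_n` and `∫ |w_n|²` are bounded, `∫ g₂(w_n)w_n → ∫ g₂(ũ)ũ`, and (Fatou)
`liminf ∫ g₃(w_n)w_n ≥ ∫ g₃(ũ)ũ`, then `∫|w_n|² → ∫|ũ|²` and hence `w_n → ũ`
strongly in `L²(ℝ^N)`. -/
theorem strong_L2_convergence (N : ℕ) (hN : 3 ≤ N)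
    (g₂ g₃ : ℝ → ℝ) (m : ℝ) (hm : 0 < m)
    (hdef : ∀ s, g₂ s = m * s + g₃ s)
    (hg₃ : ∀ s, 0 ≤ g₃ s * s)
    (w : ℕ → EuclideanSpace ℝ (Fin N) → ℝ) (u : EuclideanSpace ℝ (Fin N) → ℝ)
    (hwmem : ∀ n, MemLp (w n) 2 (volume : Measure (EuclideanSpace ℝ (Fin N))))
    (humem : MemLp u 2 (volume : Measure (EuclideanSpace ℝ (Fin N))))
    (hwint : ∀ n, Integrable (fun x => g₃ (w n x) * w n x) volume)
    (huint : Integrable (fun x => g₃ (u x) * u x) volume)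
    (hweak : ∀ v : EuclideanSpace ℝ (Fin N) → ℝ, MemLp v 2 volume →
      Tendsto (fun n => ∫ x, w n x * v x) atTop (𝓝 (∫ x, u x * v x)))
    (hbdd : ∃ C : ℝ, ∀ n,
      (∫ x, g₃ (w n x) * w n x) ≤ C ∧ (∫ x, (w n x) ^ 2) ≤ C)
    (hconv : Tendsto (fun n => ∫ x, g₂ (w n x) * w n x) atTop
      (𝓝 (∫ x, g₂ (u x) * u x)))
    (hfatou : (∫ x, g₃ (u x) * u x) ≤
      liminf (fun n => ∫ x, g₃ (w n x) * w n x) atTop) :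
    Tendsto (fun n => ∫ x, (w n x) ^ 2) atTop (𝓝 (∫ x, (u x) ^ 2)) ∧
    Tendsto (fun n => ∫ x, (w n x - u x) ^ 2) atTop (𝓝 0) := by
  set A := ∫ x, (u x) ^ 2 with hAdef
  set B := ∫ x, g₃ (u x) * u x with hBdef
  have hsqw : ∀ n, Integrable (fun x => (w n x) ^ 2) volume := fun n => (hwmem n).integrable_sq
  have hsqu : Integrable (fun x => (u x) ^ 2) volume := humem.integrable_sq
  have hmul : ∀ n, Integrable (fun x => w n x * u x) volume :=
    fun n => l2_mul_integrable (hwmem n) humem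
  -- expansion of g₂ integrals
  have hg2 : ∀ (v : EuclideanSpace ℝ (Fin N) → ℝ), MemLp v 2 volume →
      Integrable (fun x => g₃ (v x) * v x) volume →
      (∫ x, g₂ (v x) * v x) = m * (∫ x, (v x) ^ 2) + ∫ x, g₃ (v x) * v x := by
    intro v hv hvi
    have h1 : (fun x => g₂ (v x) * v x) = fun x => m * (v x) ^ 2 + g₃ (v x) * v x := by
      funext x; rw [hdef]; ring
    rw [h1, integral_add (hv.integrable_sq.const_mul m) hvi, integral_const_mul]
  -- hconv in expanded form
  have hconv' : Tendsto (fun n => m * (∫ x, (w n x) ^ 2) + ∫ x, g₃ (w n x) * w n x)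
      atTop (𝓝 (m * A + B)) := by
    have := hconv
    rw [hg2 u humem huint] at this
    refine this.congr fun n => ?_
    rw [hg2 (w n) (hwmem n) (hwint n)]
  -- cross terms converge
  have hCtend : Tendsto (fun n => ∫ x, w n x * u x) atTop (𝓝 A) := by
    have := hweak u humem
    have hA : (∫ x, u x * u x) = A := by
      rw [hAdef]; congr 1; funext x; ring
    rwa [hA] at this
  -- expansion of the square difference
  have hexp : ∀ n, (∫ x, (w n x - u x) ^ 2)
      = (∫ x, (w n x) ^ 2) - 2 * (∫ x, w n x * u x) + A := by
    intro n
    have h1 : (fun x => (w n x - u x) ^ 2)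
        = fun x => ((w n x) ^ 2 - 2 * (w n x * u x)) + (u x) ^ 2 := by
      funext x; ring
    have hi1 : Integrable (fun x => w n x ^ 2 - 2 * (w n x * u x)) volume :=
      (hsqw n).sub ((hmul n).const_mul 2)
    have hi2 : Integrable (fun x => 2 * (w n x * u x)) volume := (hmul n).const_mul 2
    rw [h1, integral_add hi1 hsqu, integral_sub (hsqw n) hi2, integral_const_mul]
  have hsqnn : ∀ n, (0:ℝ) ≤ ∫ x, (w n x - u x) ^ 2 :=
    fun n => integral_nonneg fun x => sq_nonneg _
  have hBnn : ∀ n, (0:ℝ) ≤ ∫ x, g₃ (w n x) * w n x :=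
    fun n => integral_nonneg fun x => hg₃ _
  -- main convergence of ∫ w_n²
  have hmain : Tendsto (fun n => ∫ x, (w n x) ^ 2) atTop (𝓝 A) := by
    rw [Metric.tendsto_atTop]
    intro ε hε
    have hε2 : 0 < m * ε / 2 := by positivity
    -- eventually B_n > B - mε/2
    have hBlb : ∀ᶠ n in atTop, B - m * ε / 2 < ∫ x, g₃ (w n x) * w n x := by
      apply eventually_lt_of_lt_liminf
      · exact lt_of_lt_of_le (by linarith) hfatou
      · exact ⟨0, eventually_map.mpr (Eventually.of_forall fun n => hBnn n)⟩
    -- eventually |m A_n + B_n - (m A + B)| < mε/2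
    have h1 : ∀ᶠ n in atTop,
        |m * (∫ x, (w n x) ^ 2) + (∫ x, g₃ (w n x) * w n x) - (m * A + B)| < m * ε / 2 := by
      have := Metric.tendsto_atTop.mp hconv' (m * ε / 2) hε2
      obtain ⟨N₀, hN₀⟩ := this
      filter_upwards [eventually_ge_atTop N₀] with n hn
      have := hN₀ n hn
      rwa [Real.dist_eq] at this
    -- eventually 2 C_n - A > A - ε
    have h2 : ∀ᶠ n in atTop, A - ε < 2 * (∫ x, w n x * u x) - A := by
      have h3 : Tendsto (fun n => 2 * (∫ x, w n x * u x) - A) atTop (𝓝 (2 * A - A)) :=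
        ((hCtend.const_mul 2).sub tendsto_const_nhds)
      have h4 : A - ε < 2 * A - A := by linarith
      exact h3.eventually (eventually_gt_nhds h4)
    obtain ⟨N₁, hN₁⟩ := eventually_atTop.mp ((hBlb.and h1).and h2)
    refine ⟨N₁, fun n hn => ?_⟩
    obtain ⟨⟨hB, hsum⟩, hlow⟩ := hN₁ n hn
    rw [Real.dist_eq, abs_sub_lt_iff]
    rw [abs_sub_lt_iff] at hsum
    obtain ⟨hs1, hs2⟩ := hsum
    constructor
    · nlinarith
    · have h5 := hsqnn n
      rw [hexp n] at h5
      linarith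
  refine ⟨hmain, ?_⟩
  have : Tendsto (fun n => (∫ x, (w n x) ^ 2) - 2 * (∫ x, w n x * u x) + A) atTop
      (𝓝 (A - 2 * A + A)) := (hmain.sub (hCtend.const_mul 2)).add tendsto_const_nhds
  have hz : A - 2 * A + A = 0 := by ring
  rw [hz] at this
  exact this.congr fun n => (hexp n).symm
end
end
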